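/- Let p be a prime, l ≥ 1 with l+1 < p, and let k_1, k_2 be uniform and independent on Z_p. For the polynomial MAC S((k_1,k_2), m) = k_1^{ν+1} + m_1 k_1^ν + ... + m_ν k_1 + k_2 on messages m ∈ Z_p^{≤l}, the advantage of any one-time forgery adversary is at most (l+1)/p: that is, for all a ≠ b and all functions φ: Z_p → Z_p (the adversary's choice of forged tag as a function of the observed tag t_0 = S((k_1,k_2),a)), Pr[S((k_1,k_2), b) = φ(S((k_1,k_2), a))] ≤ (l+1)/p. -/
import Mathlib

open Polynomial Finset


/-- The tag of a message `m` of length `ν ≤ l` under key `(k₁, k₂)`: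
`S((k₁,k₂), m) = k₁^{ν+1} + m_1 k₁^ν + ... + m_ν k₁ + k₂` over `Z_p`. -/
def macS {p : ℕ} (k : ZMod p × ZMod p) (m : List (ZMod p)) : ZMod p :=
  k.1 ^ (m.length + 1) + (∑ i : Fin m.length, m.get i * k.1 ^ (m.length - i.val)) + k.2

noncomputable def Qpoly {p : ℕ} (m : List (ZMod p)) : Polynomial (ZMod p) :=
  X ^ (m.length + 1) + ∑ i : Fin m.length, C (m.get i) * X ^ (m.length - i.val)

lemma macS_eq {p : ℕ} (k : ZMod p × ZMod p) (m : List (ZMod p)) :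
    macS k m = (Qpoly m).eval k.1 + k.2 := by
  simp [macS, Qpoly, eval_finset_sum]

lemma Qpoly_natDegree {p : ℕ} (m : List (ZMod p)) :
    (Qpoly m).natDegree ≤ m.length + 1 := by
  apply le_trans (natDegree_add_le _ _)
  rw [max_le_iff]
  constructor
  · exact natDegree_X_pow_le _
  · apply natDegree_sum_le_of_forall_le
    intro i _
    calc (C (m.get i) * X ^ (m.length - i.val)).natDegree
        ≤ (X ^ (m.length - i.val) : Polynomial (ZMod p)).natDegree :=
          natDegree_C_mul_le _ _
      _ ≤ m.length - i.val := natDegree_X_pow_le _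
      _ ≤ m.length + 1 := by omega

lemma Qpoly_coeff {p : ℕ} (m : List (ZMod p)) (d : ℕ) :
    (Qpoly m).coeff d = (if d = m.length + 1 then 1 else 0)
      + ∑ i : Fin m.length, m.get i * (if d = m.length - i.val then 1 else 0) := by
  simp [Qpoly, finset_sum_coeff, coeff_C_mul, coeff_X_pow]

lemma Qpoly_coeff_top {p : ℕ} (m : List (ZMod p)) :
    (Qpoly m).coeff (m.length + 1) = 1 := by
  rw [Qpoly_coeff]
  rw [if_pos rfl, Finset.sum_eq_zero, add_zero]
  intro i _
  rw [if_neg (by omega), mul_zero]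

lemma Qpoly_coeff_gt {p : ℕ} (m : List (ZMod p)) (d : ℕ) (hd : m.length + 1 < d) :
    (Qpoly m).coeff d = 0 := by
  rw [Qpoly_coeff]
  rw [if_neg (by omega), Finset.sum_eq_zero, add_zero]
  intro i _
  rw [if_neg (by omega), mul_zero]

lemma Qpoly_coeff_mid {p : ℕ} (m : List (ZMod p)) (j : Fin m.length) :
    (Qpoly m).coeff (m.length - j.val) = m.get j := by
  rw [Qpoly_coeff]
  rw [if_neg (by omega), zero_add]
  rw [Finset.sum_eq_single j]
  · rw [if_pos rfl, mul_one]
  · intro i _ hij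
    have h1 : i.val < m.length := i.isLt
    have h2 : j.val < m.length := j.isLt
    have : i.val ≠ j.val := fun h => hij (Fin.ext h)
    rw [if_neg (by omega), mul_zero]
  · intro h; exact absurd (Finset.mem_univ j) h

lemma card_eval_zero_le {F : Type*} [Field F] [Fintype F] [DecidableEq F]
    (q : Polynomial F) (hq : q ≠ 0) :
    (Finset.univ.filter fun x => q.eval x = 0).card ≤ q.natDegree := by
  have h1 : (Finset.univ.filter fun x => q.eval x = 0) ⊆ q.roots.toFinset := by
    intro x hx
    simp only [Finset.mem_filter, Finset.mem_univ, true_and] at hx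
    simp [Polynomial.mem_roots, hq, Polynomial.IsRoot, hx]
  calc (Finset.univ.filter fun x => q.eval x = 0).card
      ≤ q.roots.toFinset.card := Finset.card_le_card h1
    _ ≤ Multiset.card q.roots := Multiset.toFinset_card_le _
    _ ≤ q.natDegree := Polynomial.card_roots' q

theorem stmt_16 (p : ℕ) (hp : p.Prime) [Fact p.Prime] (l : ℕ) (hl : 1 ≤ l)
    (hlp : l + 1 < p)
    (a b : List (ZMod p)) (ha : a ≠ []) (hb : b ≠ [])
    (hal : a.length ≤ l) (hbl : b.length ≤ l) (hab : a ≠ b)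
    (φ : ZMod p → ZMod p) :
    (((Finset.univ.filter fun k : ZMod p × ZMod p =>
        macS k b = φ (macS k a))).card : ℝ) / (p ^ 2)
      ≤ (l + 1) / p := by
  have hp0 : 0 < p := hp.pos
  set P : Polynomial (ZMod p) := Qpoly b - Qpoly a with hP
  -- P has a nonzero coefficient in some degree ≥ 1
  have hPc : ∃ d : ℕ, 1 ≤ d ∧ P.coeff d ≠ 0 := by
    rcases lt_trichotomy a.length b.length with hlen | hlen | hlen
    · refine ⟨b.length + 1, by omega, ?_⟩
      rw [hP, coeff_sub, Qpoly_coeff_top, Qpoly_coeff_gt a _ (by omega), sub_zero]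
      exact one_ne_zero
    · -- equal lengths: some entry differs
      have hne : ¬ ∀ (i : ℕ) (h₁ : i < a.length) (h₂ : i < b.length),
          a.get ⟨i, h₁⟩ = b.get ⟨i, h₂⟩ := fun h => hab (List.ext_get hlen h)
      push_neg at hne
      obtain ⟨i, h₁, h₂, hne⟩ := hne
      refine ⟨a.length - i, by omega, ?_⟩
      have hc1 : (Qpoly a).coeff (a.length - i) = a.get ⟨i, h₁⟩ :=
        Qpoly_coeff_mid a ⟨i, h₁⟩
      have hc2 : (Qpoly b).coeff (a.length - i) = b.get ⟨i, h₂⟩ := by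
        have := Qpoly_coeff_mid b ⟨i, h₂⟩
        simpa [← hlen] using this
      rw [hP, coeff_sub, hc1, hc2, sub_ne_zero]
      exact fun h => hne h.symm
    · refine ⟨a.length + 1, by omega, ?_⟩
      rw [hP, coeff_sub, Qpoly_coeff_top, Qpoly_coeff_gt b _ (by omega), zero_sub]
      simp
  obtain ⟨d, hd1, hdne⟩ := hPc
  -- for each constant c, P - C c is a nonzero polynomial of natDegree ≤ l + 1
  have hPne : ∀ c : ZMod p, P - C c ≠ 0 := by
    intro c h
    have : (P - C c).coeff d = P.coeff d := by
      rw [coeff_sub, coeff_C, if_neg (by omega), sub_zero]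
    rw [h] at this
    exact hdne (by simpa using this.symm)
  have hPdeg : ∀ c : ZMod p, (P - C c).natDegree ≤ l + 1 := by
    intro c
    apply le_trans (natDegree_sub_le _ _)
    rw [max_le_iff]
    constructor
    · apply le_trans (natDegree_sub_le _ _)
      rw [max_le_iff]
      exact ⟨le_trans (Qpoly_natDegree b) (by omega),
             le_trans (Qpoly_natDegree a) (by omega)⟩
    · simp [natDegree_C]
  -- fiberwise counting over the observed tag t
  set S : Finset (ZMod p × ZMod p) :=
    Finset.univ.filter fun k : ZMod p × ZMod p => macS k b = φ (macS k a) with hS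
  have hcard : S.card = ∑ t : ZMod p, (S.filter fun k => macS k a = t).card :=
    Finset.card_eq_sum_card_fiberwise (fun k _ => Finset.mem_univ (macS k a))
  have hfiber : ∀ t : ZMod p, (S.filter fun k => macS k a = t).card ≤ l + 1 := by
    intro t
    have hmaps : ∀ k ∈ S.filter fun k => macS k a = t,
        k.1 ∈ Finset.univ.filter fun x => (P - C (φ t - t)).eval x = 0 := by
      intro k hk
      simp only [hS, Finset.mem_filter, Finset.mem_univ, true_and] at hk
      obtain ⟨hkb, hka⟩ := hk
      simp only [Finset.mem_filter, Finset.mem_univ, true_and]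
      have e1 := macS_eq k a
      have e2 := macS_eq k b
      rw [hka] at e1
      rw [hkb, hka] at e2
      simp only [hP, eval_sub, eval_C]
      have : (Qpoly b).eval k.1 - (Qpoly a).eval k.1 = φ t - t := by
        have : (Qpoly b).eval k.1 + k.2 - ((Qpoly a).eval k.1 + k.2) = φ t - t := by
          rw [← e1, ← e2]
        linear_combination this
      linear_combination this
    have hinj : Set.InjOn (fun k : ZMod p × ZMod p => k.1)
        (S.filter fun k => macS k a = t) := by
      intro k hk k' hk' hkk
      simp only [hS, Finset.coe_filter, Set.mem_setOf_eq, Finset.mem_filter,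
        Finset.mem_univ, true_and] at hk hk'
      have e1 := macS_eq k a
      have e2 := macS_eq k' a
      rw [hk.2] at e1
      rw [hk'.2] at e2
      have hkk' : k.1 = k'.1 := hkk
      have heq2 : (Qpoly a).eval k.1 + k.2 = (Qpoly a).eval k.1 + k'.2 := by
        rw [← hkk'] at e2
        exact e1.symm.trans e2
      exact Prod.ext hkk' (add_left_cancel heq2)
    calc (S.filter fun k => macS k a = t).card
        ≤ (Finset.univ.filter fun x => (P - C (φ t - t)).eval x = 0).card :=
          Finset.card_le_card_of_injOn _ hmaps hinj
      _ ≤ (P - C (φ t - t)).natDegree := card_eval_zero_le _ (hPne _)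
      _ ≤ l + 1 := hPdeg _
  have hcount : S.card ≤ p * (l + 1) := by
    rw [hcard]
    calc ∑ t : ZMod p, (S.filter fun k => macS k a = t).card
        ≤ ∑ _t : ZMod p, (l + 1) := Finset.sum_le_sum (fun t _ => hfiber t)
      _ = p * (l + 1) := by
          rw [Finset.sum_const, Finset.card_univ, ZMod.card, smul_eq_mul]
  -- final real arithmetic
  have hpR : (0 : ℝ) < p := by exact_mod_cast hp0
  rw [div_le_div_iff₀ (by positivity) hpR]
  have : (S.card : ℝ) ≤ p * (l + 1) := by exact_mod_cast hcount
  nlinarith [this, hpR]
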